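/- Let P ∈ ℝ^{d×d} and R ∈ ℝ^{S×S} be symmetric positive definite, H ∈ ℝ^{S×d}, λ ≥ 0, and define A = -(1/2)·P·Hᵀ·(λ·H·P·Hᵀ + R)⁻¹·H. If 0 < ε < 2·r(λ)/(p̄·‖H‖_F²), where p̄ is the largest eigenvalue of P and r(λ) the smallest eigenvalue of λ·H·P·Hᵀ + R, then for any b ∈ ℝ^d the map f(x) = x + ε·(A·x + b) is a bijection of ℝ^d. -/

import Mathlib

open Matrix

/-- Frobenius norm of a real matrix. -/
noncomputable def frobNorm {m n : ℕ} (M : Matrix (Fin m) (Fin n) ℝ) : ℝ :=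
  Real.sqrt (∑ i : Fin m, ∑ j : Fin n, (M i j) ^ 2)


/-- Cauchy–Schwarz for the dot product. -/
lemma dot_sq_le_dot_mul_dot {n : ℕ} (f g : Fin n → ℝ) :
    (f ⬝ᵥ g) ^ 2 ≤ (f ⬝ᵥ f) * (g ⬝ᵥ g) := by
  simpa [dotProduct, pow_two, mul_comm] using
    Finset.sum_mul_sq_le_sq_mul_sq Finset.univ f g

/-- A Hermitian real matrix minus `c` times the identity is PSD if all eigenvalues are `≥ c`. -/
lemma psd_sub_smul_one {n : ℕ} {A : Matrix (Fin n) (Fin n) ℝ} (hA : A.IsHermitian)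
    {c : ℝ} (h : ∀ i, c ≤ hA.eigenvalues i) : (A - c • 1).PosSemidef := by
  have hU : (hA.eigenvectorUnitary : Matrix (Fin n) (Fin n) ℝ) *
      star (hA.eigenvectorUnitary : Matrix (Fin n) (Fin n) ℝ) = 1 :=
    (Matrix.mem_unitaryGroup_iff).mp (hA.eigenvectorUnitary).2
  have key : A - c • (1 : Matrix (Fin n) (Fin n) ℝ) =
      (hA.eigenvectorUnitary : Matrix (Fin n) (Fin n) ℝ) *
        Matrix.diagonal (fun i => hA.eigenvalues i - c) *
        (star (hA.eigenvectorUnitary : Matrix (Fin n) (Fin n) ℝ)) := by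
    have hd : Matrix.diagonal (fun i => hA.eigenvalues i - c) =
        Matrix.diagonal (RCLike.ofReal ∘ hA.eigenvalues) -
          c • (1 : Matrix (Fin n) (Fin n) ℝ) := by
      ext i j
      rcases eq_or_ne i j with hij | hij <;>
        simp [Matrix.diagonal_apply, Matrix.one_apply, hij]
    rw [hd, Matrix.mul_sub, Matrix.sub_mul]
    conv_lhs => rw [hA.spectral_theorem, Unitary.conjStarAlgAut_apply]
    congr 1
    rw [Matrix.mul_smul, Matrix.smul_mul, mul_one, hU]
  rw [key]
  have := (Matrix.posSemidef_diagonal_iff.mpr (fun i => sub_nonneg.mpr (h i))).mul_mul_conjTranspose_same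
    (hA.eigenvectorUnitary : Matrix (Fin n) (Fin n) ℝ)
  simpa [Matrix.star_eq_conjTranspose] using this

/-- `c` times the identity minus a Hermitian real matrix is PSD if all eigenvalues are `≤ c`. -/
lemma psd_smul_one_sub {n : ℕ} {A : Matrix (Fin n) (Fin n) ℝ} (hA : A.IsHermitian)
    {c : ℝ} (h : ∀ i, hA.eigenvalues i ≤ c) : (c • 1 - A).PosSemidef := by
  have hU : (hA.eigenvectorUnitary : Matrix (Fin n) (Fin n) ℝ) *
      star (hA.eigenvectorUnitary : Matrix (Fin n) (Fin n) ℝ) = 1 :=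
    (Matrix.mem_unitaryGroup_iff).mp (hA.eigenvectorUnitary).2
  have key : c • (1 : Matrix (Fin n) (Fin n) ℝ) - A =
      (hA.eigenvectorUnitary : Matrix (Fin n) (Fin n) ℝ) *
        Matrix.diagonal (fun i => c - hA.eigenvalues i) *
        (star (hA.eigenvectorUnitary : Matrix (Fin n) (Fin n) ℝ)) := by
    have hd : Matrix.diagonal (fun i => c - hA.eigenvalues i) =
        c • (1 : Matrix (Fin n) (Fin n) ℝ) -
          Matrix.diagonal (RCLike.ofReal ∘ hA.eigenvalues) := by
      ext i j
      rcases eq_or_ne i j with hij | hij <;>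
        simp [Matrix.diagonal_apply, Matrix.one_apply, hij]
    rw [hd, Matrix.mul_sub, Matrix.sub_mul]
    conv_lhs => rw [hA.spectral_theorem, Unitary.conjStarAlgAut_apply]
    congr 1
    rw [Matrix.mul_smul, Matrix.smul_mul, mul_one, hU]
  rw [key]
  have := (Matrix.posSemidef_diagonal_iff.mpr (fun i => sub_nonneg.mpr (h i))).mul_mul_conjTranspose_same
    (hA.eigenvectorUnitary : Matrix (Fin n) (Fin n) ℝ)
  simpa [Matrix.star_eq_conjTranspose] using this

lemma rayleigh_lower {n : ℕ} {A : Matrix (Fin n) (Fin n) ℝ} (hA : A.IsHermitian)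
    {c : ℝ} (h : ∀ i, c ≤ hA.eigenvalues i) (x : Fin n → ℝ) :
    c * (x ⬝ᵥ x) ≤ x ⬝ᵥ A.mulVec x := by
  have h0 : 0 ≤ x ⬝ᵥ (A - c • 1).mulVec x := by
    simpa using (psd_sub_smul_one hA h).dotProduct_mulVec_nonneg x
  rw [Matrix.sub_mulVec, Matrix.smul_mulVec, Matrix.one_mulVec, dotProduct_sub,
    dotProduct_smul] at h0
  simpa using sub_nonneg.mp h0

lemma rayleigh_upper {n : ℕ} {A : Matrix (Fin n) (Fin n) ℝ} (hA : A.IsHermitian)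
    {c : ℝ} (h : ∀ i, hA.eigenvalues i ≤ c) (x : Fin n → ℝ) :
    x ⬝ᵥ A.mulVec x ≤ c * (x ⬝ᵥ x) := by
  have h0 : 0 ≤ x ⬝ᵥ (c • 1 - A).mulVec x := by
    simpa using (psd_smul_one_sub hA h).dotProduct_mulVec_nonneg x
  rw [Matrix.sub_mulVec, Matrix.smul_mulVec, Matrix.one_mulVec, dotProduct_sub,
    dotProduct_smul] at h0
  simpa using sub_nonneg.mp h0

open scoped MatrixOrder in
/-- Cauchy–Schwarz for a PSD bilinear form. -/
lemma psd_cauchy_schwarz {n : ℕ} {A : Matrix (Fin n) (Fin n) ℝ} (hA : A.PosSemidef)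
    (x y : Fin n → ℝ) :
    (x ⬝ᵥ A.mulVec y) ^ 2 ≤ (x ⬝ᵥ A.mulVec x) * (y ⬝ᵥ A.mulVec y) := by
  set L := CFC.sqrt A with hL
  have hLL : L * L = A := CFC.sqrt_mul_sqrt_self A hA.nonneg
  have hLsym : Lᵀ = L := by
    have := (show 0 ≤ L from CFC.sqrt_nonneg A).posSemidef.1
    simpa [Matrix.IsHermitian, Matrix.conjTranspose_eq_transpose_of_trivial] using this
  have key : ∀ u v : Fin n → ℝ, u ⬝ᵥ A.mulVec v = (L.mulVec u) ⬝ᵥ (L.mulVec v) := by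
    intro u v
    rw [← hLL, ← Matrix.mulVec_mulVec, Matrix.dotProduct_mulVec u L, ← hLsym,
      Matrix.vecMul_transpose, hLsym]
  rw [key x y, key x x, key y y]
  exact dot_sq_le_dot_mul_dot _ _

lemma mulVec_dot_le_frob {m n : ℕ} (H : Matrix (Fin m) (Fin n) ℝ) (z : Fin n → ℝ) :
    (H.mulVec z) ⬝ᵥ (H.mulVec z) ≤ frobNorm H ^ 2 * (z ⬝ᵥ z) := by
  have hF : frobNorm H ^ 2 = ∑ i : Fin m, ∑ j : Fin n, (H i j) ^ 2 := by
    rw [frobNorm, Real.sq_sqrt]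
    positivity
  rw [hF]
  have hrow : ∀ i : Fin m, (H.mulVec z i) * (H.mulVec z i) ≤
      (∑ j : Fin n, (H i j) ^ 2) * (z ⬝ᵥ z) := by
    intro i
    have := Finset.sum_mul_sq_le_sq_mul_sq Finset.univ (H i) z
    simpa [Matrix.mulVec, dotProduct, pow_two] using this
  calc (H.mulVec z) ⬝ᵥ (H.mulVec z) = ∑ i : Fin m, (H.mulVec z i) * (H.mulVec z i) := rfl
    _ ≤ ∑ i : Fin m, (∑ j : Fin n, (H i j) ^ 2) * (z ⬝ᵥ z) :=
        Finset.sum_le_sum fun i _ => hrow i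
    _ = (∑ i : Fin m, ∑ j : Fin n, (H i j) ^ 2) * (z ⬝ᵥ z) := by rw [Finset.sum_mul]

set_option maxHeartbeats 1600000 in
/-- With `P`, `R` symmetric positive definite, `λ ≥ 0`,
`A = -(1/2)•P*Hᵀ*(λ•H*P*Hᵀ + R)⁻¹*H`, `p̄` the largest eigenvalue of `P`, `r(λ)` the
smallest eigenvalue of `λ•H*P*Hᵀ + R`, and `0 < ε < 2·r(λ)/(p̄·‖H‖_F²)`, the map
`f(x) = x + ε • (A.mulVec x + b)` is a bijection of `ℝ^d` for any `b`. -/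
theorem affine_flow_step_bijective {d S : ℕ} [NeZero d] [NeZero S]
    (P : Matrix (Fin d) (Fin d) ℝ) (R : Matrix (Fin S) (Fin S) ℝ)
    (H : Matrix (Fin S) (Fin d) ℝ) (lam pbar r ε : ℝ) (b : Fin d → ℝ)
    (hP : P.PosDef) (hR : R.PosDef) (hlam : 0 ≤ lam)
    (hpbar : pbar = ⨆ i : Fin d, hP.1.eigenvalues i)
    (hsum : (lam • (H * P * Hᵀ) + R).IsHermitian)
    (hr : r = ⨅ i : Fin S, hsum.eigenvalues i)
    (hε0 : 0 < ε) (hε1 : ε < 2 * r / (pbar * frobNorm H ^ 2)) :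
    Function.Bijective (fun x : Fin d → ℝ =>
      x + ε • ((((-(1 / 2) : ℝ) •
        (P * Hᵀ * (lam • (H * P * Hᵀ) + R)⁻¹ * H)).mulVec x) + b)) := by
  classical
  set Sm : Matrix (Fin S) (Fin S) ℝ := lam • (H * P * Hᵀ) + R with hSmdef
  -- Sm is positive definite
  have hHPH : (H * P * Hᵀ).PosSemidef := by
    have := hP.posSemidef.mul_mul_conjTranspose_same H
    simpa using this
  have hsmul : (lam • (H * P * Hᵀ)).PosSemidef := by
    refine ⟨?_, fun x => ?_⟩
    · show _ = _
      rw [Matrix.conjTranspose_smul, hHPH.1.eq]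
      simp
    · exact (hHPH.smul hlam).2 x
  have hSm : Sm.PosDef := Matrix.PosDef.posSemidef_add hsmul hR
  -- eigenvalue bounds
  have hrle : ∀ i, r ≤ hsum.eigenvalues i := by
    intro i
    rw [hr]
    exact ciInf_le (Set.Finite.bddBelow (Set.finite_range _)) i
  have hrpos : 0 < r := by
    obtain ⟨i0, hi0⟩ := exists_eq_ciInf_of_finite (f := hsum.eigenvalues)
    rw [hr, ← hi0]
    exact hSm.eigenvalues_pos i0
  have hple : ∀ i, hP.1.eigenvalues i ≤ pbar := by
    intro i
    rw [hpbar]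
    exact le_ciSup (Set.Finite.bddAbove (Set.finite_range _)) i
  have hppos : 0 < pbar := by
    obtain ⟨i0, hi0⟩ := exists_eq_ciSup_of_finite (f := hP.1.eigenvalues)
    rw [hpbar, ← hi0]
    exact hP.eigenvalues_pos i0
  -- the key numeric inequality
  have hF2 : (0:ℝ) ≤ frobNorm H ^ 2 := sq_nonneg _
  have key : ε / 2 * pbar * frobNorm H ^ 2 < r := by
    rcases eq_or_lt_of_le (mul_nonneg hppos.le hF2) with hd0 | hd0
    · rw [← hd0, div_zero] at hε1
      nlinarith
    · have := (lt_div_iff₀ hd0).mp hε1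
      nlinarith
  -- inverse relation
  have hSmInv : Sm * Sm⁻¹ = 1 :=
    Matrix.mul_nonsing_inv _ (isUnit_iff_ne_zero.mpr hSm.det_pos.ne')
  set A' : Matrix (Fin d) (Fin d) ℝ :=
    (-(1 / 2) : ℝ) • (P * Hᵀ * Sm⁻¹ * H) with hA'def
  -- the linear part is injective
  have hinj : Function.Injective (Matrix.mulVecLin (1 + ε • A')) := by
    rw [← LinearMap.ker_eq_bot, LinearMap.ker_eq_bot']
    intro z hz
    by_contra hz0
    have hzz : (0:ℝ) < z ⬝ᵥ z := by
      have := dotProduct_star_self_pos_iff (R := ℝ) (v := z) |>.mpr hz0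
      simpa using this
    have hz' : z + ε • A'.mulVec z = 0 := by
      simpa [Matrix.mulVecLin_apply, Matrix.add_mulVec, Matrix.one_mulVec,
        Matrix.smul_mulVec] using hz
    set c : ℝ := ε / 2 with hc
    have hcpos : 0 < c := by positivity
    set v : Fin S → ℝ := H.mulVec z with hv
    set w : Fin S → ℝ := Sm⁻¹.mulVec v with hw
    set u : Fin d → ℝ := Hᵀ.mulVec w with hu
    have hzeq : z = c • P.mulVec u := by
      have e1 : A'.mulVec z = (-(1 / 2) : ℝ) • (P.mulVec u) := by
        rw [hA'def, Matrix.smul_mulVec]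
        congr 1
        rw [hu, hw, hv, Matrix.mulVec_mulVec, Matrix.mulVec_mulVec, Matrix.mulVec_mulVec]
      rw [e1] at hz'
      have : z = -(ε • (-(1 / 2) : ℝ) • P.mulVec u) := by
        linear_combination (norm := module) hz'
      rw [this]
      rw [hc]
      module
    have hSmw : Sm.mulVec w = v := by
      rw [hw, Matrix.mulVec_mulVec, hSmInv, Matrix.one_mulVec]
    set q : ℝ := z ⬝ᵥ u with hq
    have hq1 : q = v ⬝ᵥ w := by
      rw [hq, hu, Matrix.dotProduct_mulVec, Matrix.vecMul_transpose, hv]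
    have hq2 : q = w ⬝ᵥ Sm.mulVec w := by
      rw [hSmw, hq1, dotProduct_comm]
    have hWnn : (0:ℝ) ≤ w ⬝ᵥ w := by
      simpa [dotProduct] using Finset.sum_nonneg fun i _ => mul_self_nonneg (w i)
    have hVnn : (0:ℝ) ≤ v ⬝ᵥ v := by
      simpa [dotProduct] using Finset.sum_nonneg fun i _ => mul_self_nonneg (v i)
    have hWq : r * (w ⬝ᵥ w) ≤ q := by
      rw [hq2]; exact rayleigh_lower hsum hrle w
    have hqnn : 0 ≤ q := le_trans (mul_nonneg hrpos.le hWnn) hWq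
    have hCSq : q ^ 2 ≤ (v ⬝ᵥ v) * (w ⬝ᵥ w) := by
      rw [hq1]; exact dot_sq_le_dot_mul_dot v w
    have hqV : q * r ≤ v ⬝ᵥ v := by
      rcases eq_or_lt_of_le hqnn with h0 | h0
      · nlinarith
      · nlinarith
    have hV : v ⬝ᵥ v ≤ frobNorm H ^ 2 * (z ⬝ᵥ z) := mulVec_dot_le_frob H z
    -- quadratic form relations with P
    have hPsym : Pᵀ = P := hP.1
    have hsymm : ∀ a b' : Fin d → ℝ, a ⬝ᵥ P.mulVec b' = b' ⬝ᵥ P.mulVec a := by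
      intro a b'
      rw [Matrix.dotProduct_mulVec, ← Matrix.mulVec_transpose, hPsym, dotProduct_comm]
    have hzz2 : z ⬝ᵥ z = c * (u ⬝ᵥ P.mulVec z) := by
      calc z ⬝ᵥ z = (c • P.mulVec u) ⬝ᵥ z := by rw [← hzeq]
        _ = c * ((P.mulVec u) ⬝ᵥ z) := by rw [smul_dotProduct, smul_eq_mul]
        _ = c * (u ⬝ᵥ P.mulVec z) := by rw [dotProduct_comm, hsymm z u]
    have hqc : c * (u ⬝ᵥ P.mulVec u) = q := by
      calc c * (u ⬝ᵥ P.mulVec u) = c * ((P.mulVec u) ⬝ᵥ u) := by rw [dotProduct_comm]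
        _ = (c • P.mulVec u) ⬝ᵥ u := by rw [smul_dotProduct, smul_eq_mul]
        _ = z ⬝ᵥ u := by rw [← hzeq]
        _ = q := hq.symm
    have hCP : (u ⬝ᵥ P.mulVec z) ^ 2 ≤ (u ⬝ᵥ P.mulVec u) * (z ⬝ᵥ P.mulVec z) :=
      psd_cauchy_schwarz hP.posSemidef u z
    have hPz : z ⬝ᵥ P.mulVec z ≤ pbar * (z ⬝ᵥ z) := rayleigh_upper hP.1 hple z
    have hPznn : 0 ≤ z ⬝ᵥ P.mulVec z := by simpa using hP.posSemidef.dotProduct_mulVec_nonneg z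
    have hPunn : 0 ≤ u ⬝ᵥ P.mulVec u := by simpa using hP.posSemidef.dotProduct_mulVec_nonneg u
    -- combine everything
    have hN2 : (z ⬝ᵥ z) ^ 2 ≤ c * q * (pbar * (z ⬝ᵥ z)) := by
      have h1 : (z ⬝ᵥ z) ^ 2 = c ^ 2 * (u ⬝ᵥ P.mulVec z) ^ 2 := by
        rw [hzz2]; ring
      calc (z ⬝ᵥ z) ^ 2 = c ^ 2 * (u ⬝ᵥ P.mulVec z) ^ 2 := h1
        _ ≤ c ^ 2 * ((u ⬝ᵥ P.mulVec u) * (z ⬝ᵥ P.mulVec z)) := by nlinarith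
        _ = (c * (u ⬝ᵥ P.mulVec u)) * (c * (z ⬝ᵥ P.mulVec z)) := by ring
        _ = q * (c * (z ⬝ᵥ P.mulVec z)) := by rw [hqc]
        _ ≤ c * q * (pbar * (z ⬝ᵥ z)) := by
          nlinarith [mul_le_mul_of_nonneg_left hPz (mul_nonneg hcpos.le hqnn)]
    nlinarith [mul_le_mul_of_nonneg_left hV (mul_nonneg (mul_nonneg hcpos.le hppos.le) hzz.le),
      mul_lt_mul_of_pos_right key (by positivity : (0:ℝ) < (z ⬝ᵥ z) ^ 2),
      mul_le_mul_of_nonneg_left hqV (mul_nonneg (mul_nonneg hcpos.le hppos.le) hzz.le),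
      mul_le_mul_of_nonneg_left hN2 hrpos.le]
  have hbijlin : Function.Bijective (Matrix.mulVecLin (1 + ε • A')) :=
    ⟨hinj, LinearMap.injective_iff_surjective.mp hinj⟩
  have heq : (fun x : Fin d → ℝ =>
      x + ε • ((((-(1 / 2) : ℝ) •
        (P * Hᵀ * (lam • (H * P * Hᵀ) + R)⁻¹ * H)).mulVec x) + b)) =
      (fun y : Fin d → ℝ => y + ε • b) ∘ (Matrix.mulVecLin (1 + ε • A')) := by
    funext x
    simp only [Function.comp_apply, Matrix.mulVecLin_apply, Matrix.add_mulVec,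
      Matrix.one_mulVec, Matrix.smul_mulVec, ← hSmdef, ← hA'def]
    rw [smul_add]
    abel
  rw [heq]
  exact (Function.Bijective.comp (Equiv.addRight (ε • b)).bijective hbijlin)
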